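/- Let g : S¹ → S¹ be a C² local diffeomorphism and I ⊂ S¹ an interval such that g maps I, g(I), ..., g^{k-1}(I) diffeomorphically with ℓ(g^j(I)) ≥ σ ℓ(g^{j-1}(I)) for all 1 ≤ j ≤ k and some σ > 1. Then for all x, y ∈ I, |log((g^k)'(x) / (g^k)'(y))| ≤ C₀, where C₀ = sup|g''/g'| · 1/(1 − σ^{-1}). -/

import Mathlib

open MeasureTheory Set

/-- Bounded distortion for iterates of a C² local diffeomorphism along an
interval whose images grow exponentially (total length of the circle is 1,
so all image intervals have length at most 1). `K` is `sup |g''/g'|`. -/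
theorem stmt0 (g : ℝ → ℝ) (hg : ContDiff ℝ 2 g)
    (hder : ∀ x, deriv g x ≠ 0)
    (u v : ℝ) (huv : u ≤ v) (k : ℕ) (σ K : ℝ) (hσ : 1 < σ) (hK : 0 ≤ K)
    (hKbdd : ∀ x, |deriv (deriv g) x / deriv g x| ≤ K)
    (hdiffeo : ∀ j < k, Set.InjOn g (g^[j] '' Set.Icc u v))
    (hgrow : ∀ j, 1 ≤ j → j ≤ k →
      ENNReal.ofReal σ * volume (g^[j-1] '' Set.Icc u v)
        ≤ volume (g^[j] '' Set.Icc u v))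
    (hlen : ∀ j ≤ k, volume (g^[j] '' Set.Icc u v) ≤ 1)
    (x y : ℝ) (hx : x ∈ Set.Icc u v) (hy : y ∈ Set.Icc u v) :
    |Real.log (deriv (g^[k]) x / deriv (g^[k]) y)| ≤ K * (1 / (1 - σ⁻¹)) := by
  set r : ℝ := σ⁻¹ with hr
  have hσ0 : (0:ℝ) < σ := lt_trans one_pos hσ
  have hr0 : 0 < r := inv_pos.mpr hσ0
  have hr1 : r < 1 := inv_lt_one_of_one_lt₀ hσ
  -- differentiability facts
  have hdiffg : Differentiable ℝ g := hg.differentiable (by norm_num)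
  have hdiff2 : Differentiable ℝ (deriv g) := by
    have h2 : ContDiff ℝ (1+1) g := by norm_num; exact hg
    exact ((contDiff_succ_iff_deriv.mp h2).2.2).differentiable (by norm_num)
  have hiter : ∀ n, Differentiable ℝ (g^[n]) := by
    intro n; induction n with
    | zero => simpa using differentiable_id
    | succ n ih => rw [Function.iterate_succ']; exact hdiffg.comp ih
  -- chain rule for iterates
  have hprod : ∀ n z, deriv (g^[n]) z = ∏ j ∈ Finset.range n, deriv g (g^[j] z) := by
    intro n; induction n with
    | zero => intro z; simp
    | succ n ih =>
      intro z
      rw [Function.iterate_succ', Finset.prod_range_succ, ← ih z]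
      rw [mul_comm]; exact deriv_comp z (hdiffg _) ((hiter n) z)
  -- MVT bound for log ∘ deriv g
  have hlog : ∀ a b : ℝ, |Real.log (deriv g a) - Real.log (deriv g b)| ≤ K * |a - b| := by
    intro a b
    have key : ∀ z : ℝ, HasDerivAt (fun t => Real.log (deriv g t))
        (deriv (deriv g) z / deriv g z) z := by
      intro z
      have h1 : HasDerivAt (deriv g) (deriv (deriv g) z) z := (hdiff2 z).hasDerivAt
      have h2 := (Real.hasDerivAt_log (hder z)).comp z h1
      rw [div_eq_inv_mul]; exact h2
    have := Convex.norm_image_sub_le_of_norm_hasDerivWithin_le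
      (f := fun t => Real.log (deriv g t)) (f' := fun z => deriv (deriv g) z / deriv g z)
      (s := Set.univ) (C := K)
      (fun z _ => (key z).hasDerivWithinAt)
      (fun z _ => by rw [Real.norm_eq_abs]; exact hKbdd z)
      convex_univ (Set.mem_univ b) (Set.mem_univ a)
    simpa [Real.norm_eq_abs] using this
  -- volume growth
  set V : ℕ → ENNReal := fun j => volume (g^[j] '' Set.Icc u v) with hV
  have hgrow' : ∀ i j, j + i ≤ k → V j * (ENNReal.ofReal σ) ^ i ≤ V (j + i) := by
    intro i; induction i with
    | zero => intro j _; simp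
    | succ i ih =>
      intro j hjk
      have h1 : V j * (ENNReal.ofReal σ) ^ (i+1)
          = ENNReal.ofReal σ * (V j * (ENNReal.ofReal σ) ^ i) := by ring
      rw [h1]
      calc ENNReal.ofReal σ * (V j * (ENNReal.ofReal σ) ^ i)
          ≤ ENNReal.ofReal σ * V (j + i) :=
            mul_le_mul_right (ih j (by omega)) _
        _ ≤ V (j + i + 1) := by
            have := hgrow (j + i + 1) (by omega) (by omega)
            simpa [V] using this
        _ = V (j + (i+1)) := by ring_nf
  have hVj : ∀ j ≤ k, V j ≤ ENNReal.ofReal (r ^ (k - j)) := by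
    intro j hj
    have h1 : V j * (ENNReal.ofReal σ) ^ (k - j) ≤ 1 := by
      calc V j * (ENNReal.ofReal σ) ^ (k - j) ≤ V (j + (k - j)) :=
            hgrow' (k - j) j (by omega)
        _ = V k := by congr 1; omega
        _ ≤ 1 := hlen k le_rfl
    have h2 : V j ≤ ((ENNReal.ofReal σ) ^ (k - j))⁻¹ :=
      ENNReal.le_inv_iff_mul_le.mpr h1
    have h3 : ENNReal.ofReal (r ^ (k - j)) = ((ENNReal.ofReal σ) ^ (k - j))⁻¹ := by
      rw [hr, inv_pow, ENNReal.ofReal_inv_of_pos (pow_pos hσ0 _),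
        ENNReal.ofReal_pow hσ0.le]
    rwa [← h3] at h2
  -- distance bound
  have hdist : ∀ j ≤ k, |g^[j] x - g^[j] y| ≤ r ^ (k - j) := by
    intro j hj
    have hconn : IsPreconnected (g^[j] '' Set.Icc u v) :=
      isPreconnected_Icc.image _ (hiter j).continuous.continuousOn
    have hord := hconn.ordConnected
    have hxm : g^[j] x ∈ g^[j] '' Set.Icc u v := Set.mem_image_of_mem _ hx
    have hym : g^[j] y ∈ g^[j] '' Set.Icc u v := Set.mem_image_of_mem _ hy
    have hsub : Set.uIcc (g^[j] x) (g^[j] y) ⊆ g^[j] '' Set.Icc u v :=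
      hord.uIcc_subset hxm hym
    have h1 : ENNReal.ofReal |g^[j] x - g^[j] y| ≤ V j := by
      rw [← abs_sub_comm, ← Real.volume_interval]
      exact measure_mono hsub
    have h2 := le_trans h1 (hVj j hj)
    rwa [ENNReal.ofReal_le_ofReal_iff (by positivity)] at h2
  -- put everything together
  have hPne : ∀ z, (∀ j ∈ Finset.range k, deriv g (g^[j] z) ≠ 0) := fun z j _ => hder _
  have hlogsum : Real.log (deriv (g^[k]) x / deriv (g^[k]) y)
      = ∑ j ∈ Finset.range k,
          (Real.log (deriv g (g^[j] x)) - Real.log (deriv g (g^[j] y))) := by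
    rw [Real.log_div (by rw [hprod]; exact Finset.prod_ne_zero_iff.mpr (hPne x))
        (by rw [hprod]; exact Finset.prod_ne_zero_iff.mpr (hPne y)),
      hprod, hprod, Real.log_prod (hPne x), Real.log_prod (hPne y),
      Finset.sum_sub_distrib]
  rw [hlogsum]
  calc |∑ j ∈ Finset.range k,
          (Real.log (deriv g (g^[j] x)) - Real.log (deriv g (g^[j] y)))|
      ≤ ∑ j ∈ Finset.range k,
          |Real.log (deriv g (g^[j] x)) - Real.log (deriv g (g^[j] y))| :=
        Finset.abs_sum_le_sum_abs _ _
    _ ≤ ∑ j ∈ Finset.range k, K * r ^ (k - j) := by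
        apply Finset.sum_le_sum
        intro j hj
        have hj' : j ≤ k := le_of_lt (Finset.mem_range.mp hj)
        calc |Real.log (deriv g (g^[j] x)) - Real.log (deriv g (g^[j] y))|
            ≤ K * |g^[j] x - g^[j] y| := hlog _ _
          _ ≤ K * r ^ (k - j) := mul_le_mul_of_nonneg_left (hdist j hj') hK
    _ = K * ∑ j ∈ Finset.range k, r ^ (k - j) := by rw [Finset.mul_sum]
    _ ≤ K * (1 / (1 - r)) := by
        apply mul_le_mul_of_nonneg_left _ hK
        have hre : ∑ j ∈ Finset.range k, r ^ (k - j)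
            = ∑ j ∈ Finset.range k, r ^ (j + 1) := by
          rw [← Finset.sum_range_reflect (fun j => r ^ (j + 1)) k]
          apply Finset.sum_congr rfl
          intro j hj
          have := Finset.mem_range.mp hj
          congr 1
          omega
        rw [hre]
        calc ∑ j ∈ Finset.range k, r ^ (j + 1)
            ≤ ∑ j ∈ Finset.range k, r ^ j :=
              Finset.sum_le_sum fun j _ =>
                pow_le_pow_of_le_one hr0.le hr1.le (by omega)
          _ = (r ^ k - 1) / (r - 1) := geom_sum_eq (ne_of_lt hr1) k
          _ = (1 - r ^ k) / (1 - r) := by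
              rw [div_eq_div_iff (by linarith) (by linarith)]; ring
          _ ≤ 1 / (1 - r) := by
              have h4 : (0:ℝ) < 1 - r := by linarith
              have h5 : (0:ℝ) < r ^ k := pow_pos hr0 k
              gcongr
              linarith
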